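/- Let K be a field of characteristic p > 0 and let f : K → ℝ≥0 satisfy: f(x) = 0 if and only if x = 0; f(xy) = f(x)·f(y) for all x, y; and there exists A > 0 such that f(x + y) ≤ A · max(f(x), f(y)) for all x, y. Then f is an ultrametric absolute value on K, i.e. f(x + y) ≤ max(f(x), f(y)) for all x, y ∈ K. -/

import Mathlib

open NNReal

/-- Over a field of characteristic `p > 0`, any multiplicative `f : K → ℝ≥0`
vanishing exactly at `0` and satisfying `f (x + y) ≤ A * max (f x) (f y)` for some
`A > 0` is an ultrametric absolute value. -/
theorem ultrametric_of_charP {K : Type*} [Field K] (p : ℕ) (hp : 0 < p) [CharP K p]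
    (f : K → ℝ≥0)
    (h0 : ∀ x, f x = 0 ↔ x = 0)
    (hmul : ∀ x y, f (x * y) = f x * f y)
    (hA : ∃ A : ℝ≥0, 0 < A ∧ ∀ x y, f (x + y) ≤ A * max (f x) (f y)) :
    ∀ x y, f (x + y) ≤ max (f x) (f y) := by
  obtain ⟨A, hA0, hAle⟩ := hA
  have hf0 : f 0 = 0 := (h0 0).mpr rfl
  have hf1 : f 1 = 1 := by
    have h := hmul 1 1
    rw [one_mul] at h
    have h1 : f 1 ≠ 0 := fun h' => one_ne_zero ((h0 1).mp h')
    exact (mul_left_cancel₀ h1 (by rw [mul_one, ← h])).symm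
  have hA1 : 1 ≤ A := by
    have := hAle 1 0
    simpa [hf0, hf1] using this
  have hpow : ∀ (x : K) (n : ℕ), f (x ^ n) = (f x) ^ n := by
    intro x n
    induction n with
    | zero => simp [hf1]
    | succ n ih => rw [pow_succ, hmul, ih, pow_succ]
  set M : ℝ≥0 := 1 ⊔ (Finset.range p).sup (fun i : ℕ => f (i : K)) with hM
  have hM1 : 1 ≤ M := le_sup_left
  have hMn : ∀ n : ℕ, f (n : K) ≤ M := by
    intro n
    have hc : ((n : ℕ) : K) = ((n % p : ℕ) : K) := CharP.cast_eq_mod K p n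
    rw [hc]
    have h1 : f ((n % p : ℕ) : K) ≤ (Finset.range p).sup (fun i : ℕ => f (i : K)) :=
      Finset.le_sup (f := fun i : ℕ => f (i : K)) (Finset.mem_range.mpr (Nat.mod_lt n hp))
    exact h1.trans le_sup_right
  have key : ∀ (k : ℕ) (s : Finset ℕ) (g : ℕ → K), s.card ≤ 2 ^ k →
      f (∑ i ∈ s, g i) ≤ A ^ k * s.sup (fun i => f (g i)) := by
    intro k
    induction k with
    | zero =>
      intro s g hs
      rw [pow_zero] at hs
      obtain ⟨a, ha⟩ := Finset.card_le_one_iff_subset_singleton.mp hs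
      rcases Finset.subset_singleton_iff.mp ha with rfl | rfl
      · simp [hf0]
      · simp
    | succ k ih =>
      intro s g hs
      by_cases h : s.card ≤ 2 ^ k
      · refine (ih s g h).trans (mul_le_mul_left (pow_le_pow_right₀ hA1 (Nat.le_succ k)) _)
      · push_neg at h
        obtain ⟨t, hts, htc⟩ := Finset.exists_subset_card_eq h.le
        have h2 : (2:ℕ) ^ (k+1) = 2 ^ k + 2 ^ k := by ring
        have hsd : (s \ t).card ≤ 2 ^ k := by
          rw [Finset.card_sdiff_of_subset hts, htc]; omega
        have hsum : (∑ i ∈ s \ t, g i) + (∑ i ∈ t, g i) = ∑ i ∈ s, g i :=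
          Finset.sum_sdiff hts
        calc f (∑ i ∈ s, g i) = f ((∑ i ∈ s \ t, g i) + (∑ i ∈ t, g i)) := by rw [hsum]
          _ ≤ A * max (f (∑ i ∈ s \ t, g i)) (f (∑ i ∈ t, g i)) := hAle _ _
          _ ≤ A * max (A ^ k * (s \ t).sup (fun i => f (g i)))
                (A ^ k * t.sup (fun i => f (g i))) :=
              mul_le_mul_right (max_le_max (ih _ g hsd) (ih _ g (le_of_eq htc))) _
          _ ≤ A * (A ^ k * s.sup (fun i => f (g i))) := by
              refine mul_le_mul_right (max_le ?_ ?_) _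
              · exact mul_le_mul_right (Finset.sup_mono Finset.sdiff_subset) _
              · exact mul_le_mul_right (Finset.sup_mono hts) _
          _ = A ^ (k+1) * s.sup (fun i => f (g i)) := by ring
  have main : ∀ x y : K, ∀ k : ℕ,
      (f (x + y)) ^ (2 ^ k) ≤ A ^ (k + 1) * (M * (max (f x) (f y)) ^ (2 ^ k)) := by
    intro x y k
    set n := 2 ^ k with hn
    set b := max (f x) (f y) with hb
    have hbin : (x + y) ^ n = ∑ i ∈ Finset.range (n + 1), x ^ i * y ^ (n - i) * ((n.choose i : ℕ) : K) :=
      add_pow x y n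
    rw [← hpow, hbin]
    have hcard : (Finset.range (n + 1)).card ≤ 2 ^ (k + 1) := by
      rw [Finset.card_range, hn]
      have : 1 ≤ 2 ^ k := Nat.one_le_two_pow
      have h2 : (2:ℕ) ^ (k+1) = 2 ^ k + 2 ^ k := by ring
      omega
    refine (key (k + 1) _ _ hcard).trans (mul_le_mul_right (Finset.sup_le ?_) _)
    intro i hi
    have hin : i ≤ n := Nat.lt_succ_iff.mp (Finset.mem_range.mp hi)
    rw [hmul, hmul, hpow, hpow]
    calc (f x) ^ i * (f y) ^ (n - i) * f ((n.choose i : ℕ) : K)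
        ≤ b ^ i * b ^ (n - i) * M := by
          refine mul_le_mul' (mul_le_mul' ?_ ?_) (hMn _)
          · exact pow_le_pow_left₀ zero_le (le_max_left _ _) i
          · exact pow_le_pow_left₀ zero_le (le_max_right _ _) _
      _ = M * b ^ n := by rw [← pow_add, Nat.add_sub_cancel' hin, mul_comm]
  intro x y
  by_contra hcon
  push_neg at hcon
  set a := f (x + y) with ha
  set b := max (f x) (f y) with hb
  set C := A * M with hC
  have hC1 : 1 ≤ C := by calc (1:ℝ≥0) = 1 * 1 := (one_mul 1).symm
    _ ≤ A * M := mul_le_mul' hA1 hM1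
  have hkey : ∀ k, a ^ (2 ^ k) ≤ C ^ (k + 1) * b ^ (2 ^ k) := by
    intro k
    refine (main x y k).trans ?_
    rw [hC, mul_pow, mul_assoc]
    refine mul_le_mul_right (mul_le_mul_left ?_ _) _
    exact le_self_pow₀ hM1 (Nat.succ_ne_zero k)
  rcases eq_or_ne b 0 with hb0 | hb0
  · have h1 := hkey 0
    rw [hb0] at h1
    simp at h1
    rw [hb0] at hcon
    simp [h1] at hcon
  · have hb0' : 0 < b := hb0.bot_lt
    set r := a / b with hr
    have hr1 : 1 < r := (one_lt_div hb0').mpr hcon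
    have hrk : ∀ k, r ^ (2 ^ k) ≤ C ^ (k + 1) := by
      intro k
      rw [hr, div_pow, div_le_iff₀ (pow_pos hb0' _)]
      exact hkey k
    obtain ⟨n, hn⟩ := pow_unbounded_of_one_lt C hr1
    have hs : C < r ^ (2 ^ n) :=
      hn.trans_le (pow_le_pow_right₀ hr1.le Nat.lt_two_pow_self.le)
    set s := r ^ (2 ^ n) with hsdef
    have hs1 : 1 < s := lt_of_le_of_lt hC1 hs
    have hcontra : ∀ j, 2 ^ j < n + j + 1 := by
      intro j
      have h1 : s ^ (2 ^ j) = r ^ (2 ^ (n + j)) := by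
        rw [hsdef, ← pow_mul, ← pow_add]
      have h2 : s ^ (2 ^ j) < s ^ (n + j + 1) := by
        rw [h1]
        exact (hrk (n + j)).trans_lt (pow_lt_pow_left₀ hs zero_le (Nat.succ_ne_zero _))
      exact (pow_lt_pow_iff_right₀ hs1).mp h2
    have hj := hcontra (n + 2)
    have h2n : n < 2 ^ n := Nat.lt_two_pow_self
    have h4 : (2:ℕ) ^ (n + 2) = 4 * 2 ^ n := by ring
    omega
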